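/- Let σ be the ReLU function and let (b₁, ω₁), …, (bₙ, ωₙ) be pairwise distinct pairs with ωᵢ ∈ {−1, 1} and bᵢ ∈ ℝ such that the hyperplane points −bᵢ/ωᵢ are distinct and lie in the interior of an interval Ω = (α, β). Then the functions 1, σ(ω₁x + b₁), …, σ(ωₙx + bₙ) are linearly independent on Ω. -/
import Mathlib


theorem stmt_16 (n : ℕ) (α β : ℝ) (hαβ : α < β)
    (σ : ℝ → ℝ) (hσ : ∀ s, σ s = max 0 s)
    (ω b : Fin n → ℝ) (hω : ∀ i, ω i = 1 ∨ ω i = -1)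
    (hin : ∀ i, -(b i) / ω i ∈ Set.Ioo α β)
    (hdist : ∀ i j, i ≠ j → -(b i) / ω i ≠ -(b j) / ω j)
    (c₀ : ℝ) (c : Fin n → ℝ)
    (h : ∀ x ∈ Set.Ioo α β, c₀ + ∑ i, c i * σ (ω i * x + b i) = 0) :
    c₀ = 0 ∧ ∀ i, c i = 0 := by
  have hc : ∀ j, c j = 0 := by
    intro j
    set xj : ℝ := -(b j) / ω j with hxj
    obtain ⟨hα, hβ⟩ := hin j
    -- choose a small t > 0
    set T : Finset ℝ := insert (xj - α) (insert (β - xj)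
      ((Finset.univ.erase j).image fun i => |(-(b i) / ω i) - xj|)) with hT
    have hTne : T.Nonempty := ⟨xj - α, Finset.mem_insert_self _ _⟩
    have hTpos : ∀ y ∈ T, 0 < y := by
      intro y hy
      simp only [hT, Finset.mem_insert, Finset.mem_image, Finset.mem_erase] at hy
      rcases hy with rfl | rfl | ⟨i, ⟨hij, -⟩, rfl⟩
      · linarith
      · linarith
      · exact abs_pos.2 (sub_ne_zero.2 (hdist i j hij))
    have hmpos : 0 < T.min' hTne := hTpos _ (T.min'_mem hTne)
    set t : ℝ := T.min' hTne / 2 with ht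
    have ht0 : 0 < t := by positivity
    have hkey : ∀ y ∈ T, t < y := by
      intro y hy
      have := T.min'_le y hy
      have : T.min' hTne / 2 < T.min' hTne := half_lt_self hmpos
      linarith [T.min'_le y hy]
    have ht1 : t < xj - α := hkey _ (Finset.mem_insert_self _ _)
    have ht2 : t < β - xj := hkey _ (by simp [hT])
    have ht3 : ∀ i, i ≠ j → t < |(-(b i) / ω i) - xj| := by
      intro i hij
      apply hkey
      simp only [hT, Finset.mem_insert, Finset.mem_image, Finset.mem_erase]
      exact Or.inr (Or.inr ⟨i, ⟨hij, Finset.mem_univ i⟩, rfl⟩)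
    have hp1 : xj + t ∈ Set.Ioo α β := ⟨by linarith, by linarith⟩
    have hp2 : xj - t ∈ Set.Ioo α β := ⟨by linarith, by linarith⟩
    have hp3 : xj ∈ Set.Ioo α β := ⟨hα, hβ⟩
    have e1 := h _ hp1
    have e2 := h _ hp2
    have e3 := h _ hp3
    have hsum : ∑ i, c i * (σ (ω i * (xj + t) + b i) + σ (ω i * (xj - t) + b i)
        - 2 * σ (ω i * xj + b i)) = 0 := by
      have expand : ∀ i : Fin n, c i * (σ (ω i * (xj + t) + b i) + σ (ω i * (xj - t) + b i)
          - 2 * σ (ω i * xj + b i)) = c i * σ (ω i * (xj + t) + b i)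
          + c i * σ (ω i * (xj - t) + b i) - 2 * (c i * σ (ω i * xj + b i)) := by
        intro i; ring
      rw [Finset.sum_congr rfl (fun i _ => expand i), Finset.sum_sub_distrib,
        Finset.sum_add_distrib, ← Finset.mul_sum]
      linarith
    have hbr : ∀ i : Fin n, i ≠ j → σ (ω i * (xj + t) + b i) + σ (ω i * (xj - t) + b i)
        - 2 * σ (ω i * xj + b i) = 0 := by
      intro i hij
      have habs := ht3 i hij
      rcases hω i with h1 | h1
      · -- ω i = 1, breakpoint -b i
        have habs' : t < |(-(b i)) - xj| := by rwa [h1, div_one] at habs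
        simp only [hσ, h1, one_mul]
        rcases abs_cases ((-(b i)) - xj) with ⟨he, -⟩ | ⟨he, -⟩
        · -- -b i - xj > t, so all arguments negative
          rw [he] at habs'
          rw [max_eq_left (by linarith), max_eq_left (by linarith),
            max_eq_left (by linarith)]
          ring
        · rw [he] at habs'
          rw [max_eq_right (by linarith), max_eq_right (by linarith),
            max_eq_right (by linarith)]
          ring
      · -- ω i = -1, breakpoint b i
        have habs' : t < |b i - xj| := by
          rwa [h1, div_neg, div_one, neg_neg] at habs
        simp only [hσ, h1, neg_one_mul]
        rcases abs_cases (b i - xj) with ⟨he, -⟩ | ⟨he, -⟩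
        · rw [he] at habs'
          rw [max_eq_right (by linarith), max_eq_right (by linarith),
            max_eq_right (by linarith)]
          ring
        · rw [he] at habs'
          rw [max_eq_left (by linarith), max_eq_left (by linarith),
            max_eq_left (by linarith)]
          ring
    have hbj : σ (ω j * (xj + t) + b j) + σ (ω j * (xj - t) + b j)
        - 2 * σ (ω j * xj + b j) = t := by
      have hj0 : ω j * xj + b j = 0 := by
        rcases hω j with h1 | h1 <;>
          simp [hxj, h1] <;> ring
      have hjp : ω j * (xj + t) + b j = ω j * t := by
        rw [mul_add]; linarith
      have hjm : ω j * (xj - t) + b j = -(ω j * t) := by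
        rw [mul_sub]; linarith
      rw [hjp, hjm, hj0, hσ, hσ, hσ]
      rcases hω j with h1 | h1 <;> rw [h1]
      · rw [one_mul, max_eq_right ht0.le, max_eq_left (by linarith), max_self]; ring
      · rw [neg_one_mul, neg_neg, max_eq_left (by linarith), max_eq_right ht0.le, max_self]
        ring
    have hfin : ∑ i, c i * (σ (ω i * (xj + t) + b i) + σ (ω i * (xj - t) + b i)
        - 2 * σ (ω i * xj + b i)) = c j * (σ (ω j * (xj + t) + b j)
        + σ (ω j * (xj - t) + b j) - 2 * σ (ω j * xj + b j)) :=
      Finset.sum_eq_single_of_mem j (Finset.mem_univ j)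
        (fun i _ hij => by rw [hbr i hij, mul_zero])
    rw [hfin, hbj] at hsum
    exact (mul_eq_zero.1 hsum).resolve_right (ne_of_gt ht0)
  refine ⟨?_, hc⟩
  have := h ((α + β) / 2) ⟨by linarith, by linarith⟩
  simp only [hc, zero_mul, Finset.sum_const_zero, add_zero] at this
  exact this
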